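/- arXiv:2106.05048 — 2 statements merged into one kernel-verified Lean document; each statement's English description precedes it below -/
import Mathlib

section
/- Let Ω ⊆ ℝᵈ be open, h, 1/h ∈ L^∞(Ω) with h ≥ 0, B ∈ W^{1,∞}(Ω), and let Φ = Ψ_h(q, q_B) with q, q_B ∈ L²(Ω) and hq ∈ H¹(Ω), where Ψ_h(q,q_B) = ((∇(hq)+q_B∇B)/h, −q_B/h, −√3(2q−q_B)/h). Then for every V = (V₁,V₂,V₃) in the admissible space A_h with V₁ compactly supported in Ω, one has ⟨V, Φ⟩_h = ∫_Ω ∇·(hq V₁) dx = 0. In particular all boundary terms vanish under compact support. -/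
open MeasureTheory
open scoped RealInnerProductSpace


lemma abs_coord_le_norm {d : ℕ} (x : EuclideanSpace ℝ (Fin d)) (i : Fin d) :
    |x i| ≤ ‖x‖ := by
  have := abs_real_inner_le_norm (EuclideanSpace.single i (1:ℝ)) x
  simpa [EuclideanSpace.inner_single_left, EuclideanSpace.norm_single] using this

lemma div_integral_zero {n : ℕ} (g : EuclideanSpace ℝ (Fin (n+1)) → EuclideanSpace ℝ (Fin (n+1)))
    (hg : Differentiable ℝ g) (hgc : HasCompactSupport g)
    (hInt : Integrable (fun x => ∑ i, fderiv ℝ g x (EuclideanSpace.single i 1) i)) :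
    (∫ x, ∑ i, fderiv ℝ g x (EuclideanSpace.single i 1) i) = 0 := by
  classical
  obtain ⟨C₀, hC₀⟩ := isBounded_iff_forall_norm_le.1 hgc.isBounded
  set R : ℝ := max C₀ 0 + 1 with hR
  have hRpos : 0 < R := by positivity
  have hC₀R : C₀ < R := by
    have : C₀ ≤ max C₀ 0 := le_max_left _ _
    linarith
  letI : PartialOrder (EuclideanSpace ℝ (Fin (n+1))) :=
    PartialOrder.lift (WithLp.ofLp (p := 2)) (WithLp.ofLp_injective 2)
  set eL : EuclideanSpace ℝ (Fin (n+1)) ≃L[ℝ] (Fin (n+1) → ℝ) :=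
    EuclideanSpace.equiv (Fin (n+1)) ℝ with heL
  set a : EuclideanSpace ℝ (Fin (n+1)) := eL.symm (fun _ => -R) with ha
  set b : EuclideanSpace ℝ (Fin (n+1)) := eL.symm (fun _ => R) with hb
  have hgz : ∀ x : EuclideanSpace ℝ (Fin (n+1)), R ≤ ‖x‖ → g x = 0 := by
    intro x hx
    by_contra hne
    have : x ∈ tsupport g := subset_tsupport g (by simpa using hne)
    exact absurd (hC₀ x this) (by linarith)
  have key := MeasureTheory.integral_divergence_of_hasFDerivAt_off_countable_of_equiv
    (E := ℝ) eL (fun x y => Iff.rfl)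
    (EuclideanSpace.volume_preserving_symm_measurableEquiv_toLp (Fin (n+1)))
    (fun i x => g x i)
    (fun i x => (EuclideanSpace.proj i).comp (fderiv ℝ g x))
    ∅ Set.countable_empty a b
    (fun i => by show -R ≤ R; linarith)
    (fun i => ((EuclideanSpace.proj (𝕜 := ℝ) i).continuous.comp hg.continuous).continuousOn)
    (fun x _ i => ((EuclideanSpace.proj (𝕜 := ℝ) i).hasFDerivAt).comp x (hg x).hasFDerivAt)
    (fun x => ∑ i, fderiv ℝ g x (EuclideanSpace.single i 1) i)
    (fun x => rfl)
    hInt.integrableOn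
  have hDFz : ∀ x ∉ Set.Icc a b, (∑ i, fderiv ℝ g x (EuclideanSpace.single i 1) i) = 0 := by
    intro x hx
    have hxs : x ∉ tsupport g := by
      intro hxK
      apply hx
      constructor
      · intro i
        show -R ≤ x i
        have h1 : |x i| ≤ C₀ := (abs_coord_le_norm x i).trans (hC₀ x hxK)
        have := abs_le.1 h1
        linarith
      · intro i
        show x i ≤ R
        have h1 : |x i| ≤ C₀ := (abs_coord_le_norm x i).trans (hC₀ x hxK)
        have := abs_le.1 h1
        linarith
    have h0 : x ∉ Function.support (fderiv ℝ g) := fun hx' => hxs (support_fderiv_subset ℝ hx')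
    simp [Function.notMem_support.mp h0]
  have h1 : (∫ x, ∑ i, fderiv ℝ g x (EuclideanSpace.single i 1) i)
      = ∫ x in Set.Icc a b, ∑ i, fderiv ℝ g x (EuclideanSpace.single i 1) i :=
    (setIntegral_eq_integral_of_forall_compl_eq_zero hDFz).symm
  rw [h1, key]
  apply Finset.sum_eq_zero
  intro i _
  have hface : ∀ (r : ℝ), |r| = R →
      ∀ y : Fin n → ℝ, g (eL.symm (i.insertNth r y)) i = 0 := by
    intro r hr y
    have hnorm : R ≤ ‖eL.symm (i.insertNth r y)‖ := by
      have h2 := abs_coord_le_norm (eL.symm (i.insertNth r y)) i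
      have h3 : (eL.symm (i.insertNth r y)) i = r := by
        have h4 : ∀ f : Fin (n+1) → ℝ, eL.symm f i = f i := fun f => rfl
        rw [h4]
        exact Fin.insertNth_apply_same (α := fun _ => ℝ) i r y
      rw [h3, hr] at h2
      exact h2
    rw [hgz _ hnorm]
    rfl
  have hbi : eL b i = R := by rw [hb]; simp
  have hai : eL a i = -R := by rw [ha]; simp
  rw [hbi, hai]
  simp only [hface R (abs_of_pos hRpos),
    hface (-R) (by rw [abs_neg]; exact abs_of_pos hRpos), integral_zero, sub_zero]

/-- For `Φ = Ψ_h(q, q_B)` with `hq ∈ H¹(Ω)` and any admissible `V = (V₁,V₂,V₃)`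
with `V₁` compactly supported in `Ω`, the weighted inner product `⟨V,Φ⟩_h` equals
`∫_Ω ∇·(hq V₁) dx`, which vanishes. -/
theorem stmt6 {d : ℕ} (Ω : Set (EuclideanSpace ℝ (Fin d))) (hΩ : IsOpen Ω)
    (h q qB : EuclideanSpace ℝ (Fin d) → ℝ)
    (DB : EuclideanSpace ℝ (Fin d) → EuclideanSpace ℝ (Fin d))
    (hmeas : Measurable h) (hpos : ∀ x, 0 < h x)
    (c C CB : ℝ) (hc : 0 < c)
    (hlow : ∀ᵐ x ∂(volume.restrict Ω), c ≤ h x)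
    (hup : ∀ᵐ x ∂(volume.restrict Ω), h x ≤ C)
    (hDBbd : ∀ᵐ x ∂(volume.restrict Ω), ‖DB x‖ ≤ CB)
    (hq2 : MemLp q 2 (volume.restrict Ω)) (hqB2 : MemLp qB 2 (volume.restrict Ω))
    -- `hq ∈ H¹(Ω)` (here realized through differentiability of `x ↦ h x * q x`)
    (hhq : Differentiable ℝ fun x => h x * q x)
    -- the components of `Φ = Ψ_h(q, q_B)`
    (φ₁ : EuclideanSpace ℝ (Fin d) → EuclideanSpace ℝ (Fin d))
    (φ₂ φ₃ : EuclideanSpace ℝ (Fin d) → ℝ)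
    (hφ₁ : ∀ x, φ₁ x = (h x)⁻¹ • (gradient (fun y => h y * q y) x + qB x • DB x))
    (hφ₂ : ∀ x, φ₂ x = -(qB x) / h x)
    (hφ₃ : ∀ x, φ₃ x = -(Real.sqrt 3) * (2 * q x - qB x) / h x)
    -- `V = (V₁,V₂,V₃)` admissible with `V₁` smooth and compactly supported in `Ω`
    (V₁ : EuclideanSpace ℝ (Fin d) → EuclideanSpace ℝ (Fin d))
    (V₂ V₃ divV₁ : EuclideanSpace ℝ (Fin d) → ℝ)
    (hV₁smooth : ContDiff ℝ 1 V₁) (hV₁cpt : HasCompactSupport V₁)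
    (hV₁supp : tsupport V₁ ⊆ Ω)
    (hdivV₁ : ∀ x, divV₁ x = ∑ i, fderiv ℝ V₁ x (EuclideanSpace.single i 1) i)
    (hV₂ : ∀ x, V₂ x = ⟪V₁ x, DB x⟫ - (h x / 2) * divV₁ x)
    (hV₃ : ∀ x, V₃ x = -(h x / (2 * Real.sqrt 3)) * divV₁ x) :
    (∫ x in Ω, h x * (⟪V₁ x, φ₁ x⟫ + V₂ x * φ₂ x + V₃ x * φ₃ x)) =
      (∫ x in Ω, ∑ i, fderiv ℝ (fun y => (h y * q y) • V₁ y) x (EuclideanSpace.single i 1) i) ∧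
    (∫ x in Ω, h x * (⟪V₁ x, φ₁ x⟫ + V₂ x * φ₂ x + V₃ x * φ₃ x)) = 0 := by
  
  classical
  have hV₁d : Differentiable ℝ V₁ := hV₁smooth.differentiable one_ne_zero
  have h3 : Real.sqrt 3 * Real.sqrt 3 = 3 := Real.mul_self_sqrt (by norm_num)
  have h3ne : Real.sqrt 3 ≠ 0 := by positivity
  have key : ∀ x, h x * (⟪V₁ x, φ₁ x⟫ + V₂ x * φ₂ x + V₃ x * φ₃ x)
      = ∑ i, fderiv ℝ (fun y => (h y * q y) • V₁ y) x (EuclideanSpace.single i 1) i := by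
    intro x
    have hne : h x ≠ 0 := ne_of_gt (hpos x)
    have hsm : fderiv ℝ (fun y => (h y * q y) • V₁ y) x
        = (h x * q x) • fderiv ℝ V₁ x
          + (fderiv ℝ (fun y => h y * q y) x).smulRight (V₁ x) :=
      fderiv_smul (hhq x) (hV₁d x)
    have hgrad : ∀ i : Fin d, fderiv ℝ (fun y => h y * q y) x (EuclideanSpace.single i 1)
        = gradient (fun y => h y * q y) x i := by
      intro i
      have h1 : ⟪gradient (fun y => h y * q y) x, EuclideanSpace.single i (1:ℝ)⟫
          = fderiv ℝ (fun y => h y * q y) x (EuclideanSpace.single i 1) :=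
        InnerProductSpace.toDual_symm_apply
      rw [← h1, EuclideanSpace.inner_single_right]
      simp
    have hRHS : (∑ i, fderiv ℝ (fun y => (h y * q y) • V₁ y) x (EuclideanSpace.single i 1) i)
        = (h x * q x) * divV₁ x + ⟪V₁ x, gradient (fun y => h y * q y) x⟫ := by
      simp only [hsm, ContinuousLinearMap.add_apply, ContinuousLinearMap.coe_smul',
        Pi.smul_apply, ContinuousLinearMap.smulRight_apply, PiLp.add_apply,
        PiLp.smul_apply, smul_eq_mul, hgrad]
      rw [Finset.sum_add_distrib, ← Finset.mul_sum, ← hdivV₁ x]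
      congr 1
    rw [hRHS, hφ₁, hφ₂, hφ₃, hV₂, hV₃, inner_smul_right_eq_smul, inner_add_right,
      real_inner_smul_right]
    set G := ⟪V₁ x, gradient (fun y => h y * q y) x⟫
    set W := ⟪V₁ x, DB x⟫
    field_simp
    ring_nf
    have e : h x * (h x)⁻¹ = 1 := mul_inv_cancel₀ hne
    linear_combination (2 * G + 2 * qB x * W) * e
  have e1 : (∫ x in Ω, h x * (⟪V₁ x, φ₁ x⟫ + V₂ x * φ₂ x + V₃ x * φ₃ x))
      = ∫ x in Ω, ∑ i, fderiv ℝ (fun y => (h y * q y) • V₁ y) x (EuclideanSpace.single i 1) i :=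
    integral_congr_ae (Filter.Eventually.of_forall key)
  refine ⟨e1, e1.trans ?_⟩
  set g : EuclideanSpace ℝ (Fin d) → EuclideanSpace ℝ (Fin d) :=
    fun y => (h y * q y) • V₁ y with hgdef
  have hgdiff : Differentiable ℝ g := fun x => (hhq x).smul (hV₁d x)
  have hgc : HasCompactSupport g := hV₁cpt.smul_left (f := fun y => h y * q y)
  have htg : tsupport g ⊆ Ω :=
    (closure_mono (Function.support_smul_subset_right (fun y => h y * q y) _)).trans hV₁supp
  have hDF0 : ∀ x ∉ Ω, (∑ i, fderiv ℝ g x (EuclideanSpace.single i 1) i) = 0 := by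
    intro x hx
    have hxs : x ∉ tsupport g := fun hmem => hx (htg hmem)
    have h0 : x ∉ Function.support (fderiv ℝ g) := fun hx' => hxs (support_fderiv_subset ℝ hx')
    simp [Function.notMem_support.mp h0]
  have e2 : (∫ x in Ω, ∑ i, fderiv ℝ g x (EuclideanSpace.single i 1) i)
      = ∫ x, ∑ i, fderiv ℝ g x (EuclideanSpace.single i 1) i :=
    setIntegral_eq_integral_of_forall_compl_eq_zero hDF0
  rw [e2]
  by_cases hInt : Integrable (fun x => ∑ i, fderiv ℝ g x (EuclideanSpace.single i 1) i)
  · cases d with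
    | zero => simp
    | succ n => exact div_integral_zero g hgdiff hgc hInt
  · exact integral_undef hInt
end

section
/- In the fully discrete 1D scheme on cells indexed by a finite set with ghost cells: if at every boundary face f with interior cell k_i and ghost cell k_g the condition (h_{k_g} q_{k_g} u_{k_i} + h_{k_i} q_{k_i} u_{k_g})·ν_{k_i}^{k_g} = 0 holds, then the sum ⟨U,Φ⟩_h^δ = −Σ_{k} Σ_{f∈F_k} (h_{k_f} q_{k_f} u_k + h_k q_k u_{k_f})/2 · ν_k^{k_f} m_f over all cells vanishes, because interior face contributions cancel by antisymmetry ν_k^{k_f} = −ν_{k_f}^k and boundary face contributions vanish by assumption. -/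
lemma telescope_Icc (g : ℤ → ℝ) : ∀ N : ℤ, 0 ≤ N →
    ∑ k ∈ Finset.Icc (1 : ℤ) N, (g k - g (k - 1)) = g N - g 0 := by
  intro N hN
  have himg : Finset.Icc (1 : ℤ) N = (Finset.range N.toNat).image (fun i : ℕ => (i : ℤ) + 1) := by
    ext x
    simp only [Finset.mem_Icc, Finset.mem_image, Finset.mem_range]
    constructor
    · intro hx
      exact ⟨(x - 1).toNat, by omega, by omega⟩
    · rintro ⟨i, hi, rfl⟩
      omega
  rw [himg, Finset.sum_image (by intro a _ b _ hab; simp only at hab; omega)]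
  have : ∀ i : ℕ, g ((i : ℤ) + 1) - g ((i : ℤ) + 1 - 1) = g ((i : ℤ) + 1) - g (i : ℤ) := by
    intro i; norm_num
  rw [Finset.sum_congr rfl (fun i _ => this i)]
  have := Finset.sum_range_sub (fun i : ℕ => g (i : ℤ)) N.toNat
  push_cast at this ⊢
  rw [this]
  congr 2
  omega

/-- Fully discrete 1D orthogonality criterion: interior cells `1,…,N`, ghost cells
`0` and `N+1`.  If the projection condition holds at the two boundary faces, then
the face-flux sum `⟨U,Φ⟩_h^δ` over all cells vanishes (interior contributions
cancel by antisymmetry of the normals, boundary ones by assumption). -/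
theorem stmt17 (N : ℤ) (hN : 1 ≤ N) (h q u : ℤ → ℝ)
    (hbL : h 0 * q 0 * u 1 + h 1 * q 1 * u 0 = 0)
    (hbR : h (N + 1) * q (N + 1) * u N + h N * q N * u (N + 1) = 0) :
    -(∑ k ∈ Finset.Icc (1 : ℤ) N,
        ((h (k + 1) * q (k + 1) * u k + h k * q k * u (k + 1)) / 2 * 1 +
         (h (k - 1) * q (k - 1) * u k + h k * q k * u (k - 1)) / 2 * (-1))) = 0 := by
  have key : ∀ k : ℤ,
      (h (k + 1) * q (k + 1) * u k + h k * q k * u (k + 1)) / 2 * 1 +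
        (h (k - 1) * q (k - 1) * u k + h k * q k * u (k - 1)) / 2 * (-1) =
      (fun j => (h (j + 1) * q (j + 1) * u j + h j * q j * u (j + 1)) / 2) k -
        (fun j => (h (j + 1) * q (j + 1) * u j + h j * q j * u (j + 1)) / 2) (k - 1) := by
    intro k
    simp only
    rw [sub_add_cancel]
    ring
  rw [Finset.sum_congr rfl (fun k _ => key k),
    telescope_Icc (fun j => (h (j + 1) * q (j + 1) * u j + h j * q j * u (j + 1)) / 2) N (by omega)]
  linarith
end
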